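/- arXiv:1503.02600 — 2 statements merged into one kernel-verified Lean document; each statement's English description precedes it below -/
import Mathlib

section
/- Let σ_0 > 0 and suppose σ ≥ σ_0. Then with I_σ, ω_σ as above, there exist positive constants C_1 = 1 + ln I_{σ_0} and C_2 = σ_0²/(1 + σ_0² I_{σ_0}) (depending only on σ_0) such that C_2·(1 + ln(1 + σ²))/σ² ≤ L_σ ≤ C_1·(1 + ln(1 + σ²))/σ², where L_σ = (1 + ln(1 + 1/(σ²I_σ)))/(1 + σ²I_σ) + ln(1 + σ²I_σ)/(σ²I_σ). -/
set_option maxHeartbeats 4000000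


/-- Let σ ≥ σ₀ > 0 and I_σ = 1/2 + (1/2)√(1 + 4/σ²).  With
L_σ = (1 + ln(1 + 1/(σ²I_σ)))/(1 + σ²I_σ) + ln(1 + σ²I_σ)/(σ²I_σ),
C₁ = 1 + ln I_{σ₀} and C₂ = σ₀²/(1 + σ₀²I_{σ₀}), one has
C₂·(1 + ln(1 + σ²))/σ² ≤ L_σ ≤ C₁·(1 + ln(1 + σ²))/σ². -/
theorem stmt_11 (σ₀ σ : ℝ) (hσ₀ : 0 < σ₀) (hσ : σ₀ ≤ σ)
    (I I₀ L C₁ C₂ : ℝ)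
    (hI : I = 1 / 2 + (1 / 2) * Real.sqrt (1 + 4 / σ ^ 2))
    (hI₀ : I₀ = 1 / 2 + (1 / 2) * Real.sqrt (1 + 4 / σ₀ ^ 2))
    (hL : L = (1 + Real.log (1 + 1 / (σ ^ 2 * I))) / (1 + σ ^ 2 * I)
        + Real.log (1 + σ ^ 2 * I) / (σ ^ 2 * I))
    (hC₁ : C₁ = 1 + Real.log I₀)
    (hC₂ : C₂ = σ₀ ^ 2 / (1 + σ₀ ^ 2 * I₀)) :
    0 < C₁ ∧ 0 < C₂ ∧
      C₂ * (1 + Real.log (1 + σ ^ 2)) / σ ^ 2 ≤ L ∧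
      L ≤ C₁ * (1 + Real.log (1 + σ ^ 2)) / σ ^ 2 := by
  have hσp : 0 < σ := lt_of_lt_of_le hσ₀ hσ
  have hs : 0 < σ ^ 2 := by positivity
  have hs0 : 0 < σ₀ ^ 2 := by positivity
  have hs0s : σ₀ ^ 2 ≤ σ ^ 2 := by nlinarith
  have hsq : Real.sqrt (1 + 4 / σ ^ 2) ^ 2 = 1 + 4 / σ ^ 2 :=
    Real.sq_sqrt (by positivity)
  have h1lt : (1:ℝ) < Real.sqrt (1 + 4 / σ ^ 2) := by
    have h4 : (0:ℝ) < 4 / σ ^ 2 := by positivity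
    nlinarith [Real.sqrt_nonneg (1 + 4 / σ ^ 2)]
  have h1lt0 : (1:ℝ) < Real.sqrt (1 + 4 / σ₀ ^ 2) := by
    have h4 : (0:ℝ) < 4 / σ₀ ^ 2 := by positivity
    have hsq0 : Real.sqrt (1 + 4 / σ₀ ^ 2) ^ 2 = 1 + 4 / σ₀ ^ 2 :=
      Real.sq_sqrt (by positivity)
    nlinarith [Real.sqrt_nonneg (1 + 4 / σ₀ ^ 2)]
  have hI1 : 1 < I := by rw [hI]; linarith
  have hI01 : 1 < I₀ := by rw [hI₀]; linarith
  have hII0 : I ≤ I₀ := by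
    rw [hI, hI₀]
    have h1 : 4 / σ ^ 2 ≤ 4 / σ₀ ^ 2 := by gcongr
    have := Real.sqrt_le_sqrt (show 1 + 4 / σ ^ 2 ≤ 1 + 4 / σ₀ ^ 2 by linarith)
    linarith
  have hIp : (0:ℝ) < I := by linarith
  have h4 : σ ^ 2 * (4 / σ ^ 2) = 4 := by field_simp
  have hkey : σ ^ 2 * I ^ 2 = 1 + σ ^ 2 * I := by
    rw [hI]
    linear_combination (σ ^ 2 / 4) * hsq + (1 / 4) * h4
  have ha : 0 < σ ^ 2 * I := mul_pos hs hIp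
  have h1a : (0:ℝ) < 1 + σ ^ 2 * I := by linarith
  have hlogI0 : 0 ≤ Real.log I := Real.log_nonneg hI1.le
  have hImone : I - 1 = 1 / (σ ^ 2 * I) := by
    rw [eq_div_iff (ne_of_gt ha)]
    linear_combination hkey
  have hlogI : Real.log I ≤ 1 / (σ ^ 2 * I) := by
    have h := Real.log_le_sub_one_of_pos hIp
    linarith
  have hIdent : 1 + 1 / (σ ^ 2 * I) = I := by linarith
  rw [hIdent] at hL
  have hlg0 : 0 ≤ Real.log (1 + σ ^ 2) := Real.log_nonneg (by linarith)
  -- upper bound pieces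
  have hT1 : (1 + Real.log I) / (1 + σ ^ 2 * I) ≤ 1 / (σ ^ 2 * I) := by
    rw [div_le_div_iff₀ h1a ha]
    have h := mul_le_mul_of_nonneg_right hlogI ha.le
    have hinv : 1 / (σ ^ 2 * I) * (σ ^ 2 * I) = 1 := by field_simp
    nlinarith [h, hinv]
  have hlog1a : Real.log (1 + σ ^ 2 * I) ≤ (Real.log (1 + σ ^ 2)) + 1 / (σ ^ 2 * I) := by
    have h1 : 1 + σ ^ 2 * I ≤ (1 + σ ^ 2) * I := by nlinarith
    have h2 : Real.log (1 + σ ^ 2 * I) ≤ Real.log ((1 + σ ^ 2) * I) :=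
      Real.log_le_log (by linarith) h1
    rw [Real.log_mul (by positivity) (by positivity)] at h2
    linarith
  have hT2 : Real.log (1 + σ ^ 2 * I) / (σ ^ 2 * I)
      ≤ ((Real.log (1 + σ ^ 2)) + 1 / (σ ^ 2 * I)) / (σ ^ 2 * I) := by gcongr
  have hsum : 1 / (σ ^ 2 * I) + ((Real.log (1 + σ ^ 2)) + 1 / (σ ^ 2 * I)) / (σ ^ 2 * I)
      = 1 / σ ^ 2 + (Real.log (1 + σ ^ 2)) / (σ ^ 2 * I) := by
    field_simp
    ring_nf
    nlinarith [hkey, hs, hIp]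
  have hlast : (Real.log (1 + σ ^ 2)) / (σ ^ 2 * I) ≤ (Real.log (1 + σ ^ 2)) / σ ^ 2 := by
    gcongr
    nlinarith
  have hupper : L ≤ (1 + (Real.log (1 + σ ^ 2))) / σ ^ 2 := by
    rw [hL]
    have : (1 + (Real.log (1 + σ ^ 2))) / σ ^ 2 = 1 / σ ^ 2 + (Real.log (1 + σ ^ 2)) / σ ^ 2 := by ring
    linarith
  have hC₁pos : 0 < C₁ := by
    rw [hC₁]
    have := Real.log_nonneg hI01.le
    linarith
  have hden0 : (0:ℝ) < 1 + σ₀ ^ 2 * I₀ := by nlinarith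
  have hC₂pos : 0 < C₂ := by rw [hC₂]; exact div_pos hs0 hden0
  -- final upper
  have hC₁1 : 1 ≤ C₁ := by
    rw [hC₁]; have := Real.log_nonneg hI01.le; linarith
  have hup : L ≤ C₁ * (1 + (Real.log (1 + σ ^ 2))) / σ ^ 2 := by
    have h : (1 + (Real.log (1 + σ ^ 2))) / σ ^ 2 ≤ C₁ * (1 + (Real.log (1 + σ ^ 2))) / σ ^ 2 := by
      gcongr
      nlinarith
    linarith
  -- lower bound
  have hkey2 : C₂ * (1 + σ ^ 2 * I) ≤ σ ^ 2 := by
    rw [hC₂, div_mul_eq_mul_div, div_le_iff₀ hden0]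
    nlinarith [mul_le_mul_of_nonneg_left hII0 hs0.le, mul_pos hs0 hs]
  have hl1 : C₂ / σ ^ 2 ≤ 1 / (1 + σ ^ 2 * I) := by
    rw [div_le_div_iff₀ hs h1a]
    linarith
  have hC2I : C₂ * I ≤ 1 := by
    rw [hC₂, div_mul_eq_mul_div, div_le_one hden0]
    nlinarith [mul_le_mul_of_nonneg_left hII0 hs0.le]
  have hl2 : C₂ * (Real.log (1 + σ ^ 2)) / σ ^ 2 ≤ (Real.log (1 + σ ^ 2)) / (σ ^ 2 * I) := by
    rw [div_le_div_iff₀ hs ha]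
    have h : (Real.log (1 + σ ^ 2)) * σ ^ 2 * (C₂ * I) ≤ (Real.log (1 + σ ^ 2)) * σ ^ 2 * 1 :=
      mul_le_mul_of_nonneg_left hC2I (mul_nonneg hlg0 hs.le)
    calc C₂ * (Real.log (1 + σ ^ 2)) * (σ ^ 2 * I) = (Real.log (1 + σ ^ 2)) * σ ^ 2 * (C₂ * I) := by ring
      _ ≤ (Real.log (1 + σ ^ 2)) * σ ^ 2 * 1 := h
      _ = (Real.log (1 + σ ^ 2)) * σ ^ 2 := by ring
  have hT1' : 1 / (1 + σ ^ 2 * I) ≤ (1 + Real.log I) / (1 + σ ^ 2 * I) := by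
    gcongr; linarith
  have hT2' : (Real.log (1 + σ ^ 2)) / (σ ^ 2 * I) ≤ Real.log (1 + σ ^ 2 * I) / (σ ^ 2 * I) :=
    div_le_div_of_nonneg_right (Real.log_le_log (by linarith) (by nlinarith)) ha.le
  have hlow : C₂ * (1 + (Real.log (1 + σ ^ 2))) / σ ^ 2 ≤ L := by
    rw [hL]
    have : C₂ * (1 + (Real.log (1 + σ ^ 2))) / σ ^ 2 = C₂ / σ ^ 2 + C₂ * (Real.log (1 + σ ^ 2)) / σ ^ 2 := by ring
    linarith
  exact ⟨hC₁pos, hC₂pos, hlow, hup⟩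
end

section
/- Let r ≥ r_0 > 1/2, g ∈ (0, g_0] with g_0 ≤ 1, and consider normalized Korobov eigenvalues λ̄_1 = 1/Λ, λ̄_{2k} = λ̄_{2k+1} = g k^{−2r}/Λ with Λ = 1 + 2gζ(2r). Then the sum L = ∑_{k=2}^∞ (1 + |ln λ̄_k|)·λ̄_k satisfies C₁·(1 + |ln g|)·g ≤ L ≤ C₂·(1 + |ln g|)·g for constants C₁ = 2/(1 + 2g_0 ζ(2r_0)) > 0 and some C₂ depending only on r_0 and g_0. -/
set_option maxHeartbeats 1000000

open Real

lemma aux_sum_rpow (s : ℝ) (hs : 1 < s) :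
    Summable (fun k : ℕ => ((k : ℝ) + 1) ^ (-s)) := by
  have h : Summable (fun n : ℕ => (n : ℝ) ^ (-s)) :=
    Real.summable_nat_rpow.mpr (by linarith)
  have h2 := (summable_nat_add_iff 1).mpr h
  simpa using h2

lemma aux_texp (δ t : ℝ) (hδ : 0 < δ) (ht : 0 ≤ t) :
    t * Real.exp (-t) ≤ (1/δ) * Real.exp (-((1-δ)*t)) := by
  have h1 : δ*t ≤ Real.exp (δ*t) := le_trans (by linarith) (Real.add_one_le_exp _)
  have h2 : Real.exp (δ*t) * Real.exp (-t) = Real.exp (-((1-δ)*t)) := by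
    rw [← Real.exp_add]; ring_nf
  have h5 : δ*t*Real.exp (-t) ≤ Real.exp (-((1-δ)*t)) := by
    rw [← h2]
    exact mul_le_mul_of_nonneg_right h1 (Real.exp_pos _).le
  have : t * Real.exp (-t) = (1/δ) * (δ*t*Real.exp (-t)) := by field_simp
  rw [this]
  exact mul_le_mul_of_nonneg_left h5 (by positivity)

lemma aux_logbound (r₀ r x : ℝ) (hr₀ : 1/2 < r₀) (hr : r₀ ≤ r) (hx : 1 ≤ x) :
    2*r*Real.log x * x^(-(2*r)) ≤ (1/((2*r₀-1)/(4*r₀))) * x^(-(r₀+1/2)) := by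
  have hr₀0 : 0 < r₀ := by linarith
  have hδ : 0 < (2*r₀-1)/(4*r₀) := div_pos (by linarith) (by linarith)
  have hδ1 : (1-(2*r₀-1)/(4*r₀))*(2*r₀) = r₀+1/2 := by field_simp; ring
  have hδlt : (2*r₀-1)/(4*r₀) < 1 := by
    rw [div_lt_one (by linarith)]; linarith
  have hx0 : (0:ℝ) < x := by linarith
  have hlx : 0 ≤ Real.log x := Real.log_nonneg hx
  have ht : 0 ≤ 2*r*Real.log x := mul_nonneg (by linarith) hlx
  have hrpow : x^(-(2*r)) = Real.exp (-(2*r*Real.log x)) := by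
    rw [Real.rpow_def_of_pos hx0]; congr 1; ring
  have h1 := aux_texp ((2*r₀-1)/(4*r₀)) (2*r*Real.log x) hδ ht
  have h2 : Real.exp (-((1-(2*r₀-1)/(4*r₀))*(2*r*Real.log x)))
      = x^(-((1-(2*r₀-1)/(4*r₀))*(2*r))) := by
    rw [Real.rpow_def_of_pos hx0]; congr 1; ring
  have h3 : x^(-((1-(2*r₀-1)/(4*r₀))*(2*r))) ≤ x^(-(r₀+1/2)) := by
    apply Real.rpow_le_rpow_of_exponent_le hx
    nlinarith
  calc 2*r*Real.log x * x^(-(2*r))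
      = 2*r*Real.log x * Real.exp (-(2*r*Real.log x)) := by rw [hrpow]
    _ ≤ (1/((2*r₀-1)/(4*r₀))) * Real.exp (-((1-(2*r₀-1)/(4*r₀))*(2*r*Real.log x))) := h1
    _ = (1/((2*r₀-1)/(4*r₀))) * x^(-((1-(2*r₀-1)/(4*r₀))*(2*r))) := by rw [h2]
    _ ≤ (1/((2*r₀-1)/(4*r₀))) * x^(-(r₀+1/2)) :=
        mul_le_mul_of_nonneg_left h3 (by positivity)

/-- Korobov normalized eigenvalues: for r ≥ r₀ > 1/2 and 0 < g ≤ g₀ ≤ 1, with trace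
Λ = 1 + 2gζ(2r), the sum L = ∑_{k=2}^∞ (1 + |ln λ̄_k|)λ̄_k
(here L = 2∑_{k=1}^∞ (1 + |ln(g k^{−2r}/Λ)|)·g k^{−2r}/Λ, pairing the doubled eigenvalues)
satisfies C₁(1 + |ln g|)g ≤ L ≤ C₂(1 + |ln g|)g with C₁ = 2/(1 + 2g₀ζ(2r₀)) and
some C₂ > 0 depending only on r₀, g₀.  ζ(s) = ∑_{k=1}^∞ k^{-s}. -/
theorem stmt_16 (r₀ g₀ : ℝ) (hr₀ : 1 / 2 < r₀) (hg₀0 : 0 < g₀) (hg₀1 : g₀ ≤ 1) :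
    ∃ C₂ : ℝ, 0 < C₂ ∧ ∀ r g : ℝ, r₀ ≤ r → 0 < g → g ≤ g₀ →
      (2 / (1 + 2 * g₀ * ∑' k : ℕ, ((k : ℝ) + 1) ^ (-(2 * r₀)))) * (1 + |Real.log g|) * g
        ≤ (∑' k : ℕ, 2 * (1 + |Real.log (g * ((k : ℝ) + 1) ^ (-(2 * r))
              / (1 + 2 * g * ∑' i : ℕ, ((i : ℝ) + 1) ^ (-(2 * r))))|)
            * (g * ((k : ℝ) + 1) ^ (-(2 * r))
              / (1 + 2 * g * ∑' i : ℕ, ((i : ℝ) + 1) ^ (-(2 * r))))) ∧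
      (∑' k : ℕ, 2 * (1 + |Real.log (g * ((k : ℝ) + 1) ^ (-(2 * r))
              / (1 + 2 * g * ∑' i : ℕ, ((i : ℝ) + 1) ^ (-(2 * r))))|)
            * (g * ((k : ℝ) + 1) ^ (-(2 * r))
              / (1 + 2 * g * ∑' i : ℕ, ((i : ℝ) + 1) ^ (-(2 * r)))))
        ≤ C₂ * (1 + |Real.log g|) * g := by
  have hone : ∀ k : ℕ, (1:ℝ) ≤ (k:ℝ)+1 := fun k => by
    have : (0:ℝ) ≤ (k:ℝ) := Nat.cast_nonneg k
    linarith
  have hZ0sum : Summable (fun k : ℕ => ((k:ℝ)+1)^(-(2*r₀))) :=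
    aux_sum_rpow _ (by linarith)
  have hZssum : Summable (fun k : ℕ => ((k:ℝ)+1)^(-(r₀+1/2))) :=
    aux_sum_rpow _ (by linarith)
  set Z₀ := ∑' k : ℕ, ((k:ℝ)+1)^(-(2*r₀)) with hZ₀def
  set Zs := ∑' k : ℕ, ((k:ℝ)+1)^(-(r₀+1/2)) with hZsdef
  have hZ₀1 : (1:ℝ) ≤ Z₀ := by
    have h0 : (((0:ℕ):ℝ)+1)^(-(2*r₀)) = 1 := by norm_num
    calc (1:ℝ) = (((0:ℕ):ℝ)+1)^(-(2*r₀)) := h0.symm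
      _ ≤ Z₀ := Summable.le_tsum hZ0sum 0 (fun j _ => Real.rpow_nonneg (by positivity) _)
  have hZs0 : (0:ℝ) ≤ Zs := tsum_nonneg (fun k => Real.rpow_nonneg (by positivity) _)
  have hδ : 0 < (2*r₀-1)/(4*r₀) := div_pos (by linarith) (by linarith)
  have hA : (0:ℝ) ≤ 2*g₀*Z₀ := by nlinarith
  refine ⟨2*(1+2*g₀*Z₀)*Z₀ + (1/((2*r₀-1)/(4*r₀)))*2*Zs, ?_, ?_⟩
  · have h1 : (2:ℝ) ≤ 2*(1+2*g₀*Z₀)*Z₀ := by nlinarith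
    have h2 : (0:ℝ) ≤ (1/((2*r₀-1)/(4*r₀)))*2*Zs :=
      mul_nonneg (by positivity) hZs0
    linarith
  intro r g hr hg hgg₀
  have hg1 : g ≤ 1 := le_trans hgg₀ hg₀1
  have hrsum : Summable (fun k : ℕ => ((k:ℝ)+1)^(-(2*r))) :=
    aux_sum_rpow _ (by linarith)
  set Zr := ∑' i : ℕ, ((i:ℝ)+1)^(-(2*r)) with hZrdef
  have hZr1 : (1:ℝ) ≤ Zr := by
    have h0 : (((0:ℕ):ℝ)+1)^(-(2*r)) = 1 := by norm_num
    calc (1:ℝ) = (((0:ℕ):ℝ)+1)^(-(2*r)) := h0.symm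
      _ ≤ Zr := Summable.le_tsum hrsum 0 (fun j _ => Real.rpow_nonneg (by positivity) _)
  have hZrZ₀ : Zr ≤ Z₀ :=
    Summable.tsum_le_tsum (fun k => Real.rpow_le_rpow_of_exponent_le (hone k) (by linarith))
      hrsum hZ0sum
  have hΛ1 : (1:ℝ) ≤ 1+2*g*Zr := by nlinarith
  have hΛpos : (0:ℝ) < 1+2*g*Zr := by linarith
  have hΛle : 1+2*g*Zr ≤ 1+2*g₀*Z₀ := by nlinarith
  have hlogΛ0 : 0 ≤ Real.log (1+2*g*Zr) := Real.log_nonneg hΛ1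
  have hlogΛA : Real.log (1+2*g*Zr) ≤ 2*g₀*Z₀ := by
    have := Real.log_le_sub_one_of_pos hΛpos
    linarith
  have hlg : |Real.log g| = -Real.log g := abs_of_nonpos (Real.log_nonpos hg.le hg1)
  have hlgnn : (0:ℝ) ≤ 1 + |Real.log g| := by positivity
  -- pointwise identity for the summand
  have hterm : ∀ k : ℕ,
      2 * (1 + |Real.log (g * ((k:ℝ)+1)^(-(2*r)) / (1+2*g*Zr))|)
        * (g * ((k:ℝ)+1)^(-(2*r)) / (1+2*g*Zr))
      = 2 * ((1 - Real.log g + Real.log (1+2*g*Zr)) + 2*r*Real.log ((k:ℝ)+1))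
        * (g * ((k:ℝ)+1)^(-(2*r)) / (1+2*g*Zr)) := by
    intro k
    have hx1 := hone k
    have hx0 : (0:ℝ) < (k:ℝ)+1 := by linarith
    have hp : (0:ℝ) < ((k:ℝ)+1)^(-(2*r)) := Real.rpow_pos_of_pos hx0 _
    have hp1 : ((k:ℝ)+1)^(-(2*r)) ≤ 1 :=
      Real.rpow_le_one_of_one_le_of_nonpos hx1 (by linarith)
    have ha_pos : (0:ℝ) < g * ((k:ℝ)+1)^(-(2*r)) / (1+2*g*Zr) := by positivity
    have ha1 : g * ((k:ℝ)+1)^(-(2*r)) / (1+2*g*Zr) ≤ 1 := by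
      rw [div_le_one hΛpos]; nlinarith
    have hlog : Real.log (g * ((k:ℝ)+1)^(-(2*r)) / (1+2*g*Zr))
        = Real.log g + (-(2*r))*Real.log ((k:ℝ)+1) - Real.log (1+2*g*Zr) := by
      rw [Real.log_div (by positivity) (by positivity),
        Real.log_mul hg.ne' hp.ne', Real.log_rpow hx0]
    have habs : |Real.log (g * ((k:ℝ)+1)^(-(2*r)) / (1+2*g*Zr))|
        = -Real.log (g * ((k:ℝ)+1)^(-(2*r)) / (1+2*g*Zr)) :=
      abs_of_nonpos (Real.log_nonpos ha_pos.le ha1)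
    rw [habs, hlog]; ring
  -- nonnegativity and summability of the summand
  have hterm_nonneg : ∀ k : ℕ,
      0 ≤ 2 * (1 + |Real.log (g * ((k:ℝ)+1)^(-(2*r)) / (1+2*g*Zr))|)
        * (g * ((k:ℝ)+1)^(-(2*r)) / (1+2*g*Zr)) := by
    intro k
    have hx0 : (0:ℝ) < (k:ℝ)+1 := by linarith [hone k]
    positivity
  -- pointwise upper bound
  have hup : ∀ k : ℕ,
      2 * (1 + |Real.log (g * ((k:ℝ)+1)^(-(2*r)) / (1+2*g*Zr))|)
        * (g * ((k:ℝ)+1)^(-(2*r)) / (1+2*g*Zr))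
      ≤ (2*(1+|Real.log g|+2*g₀*Z₀)*g) * ((k:ℝ)+1)^(-(2*r₀))
        + (2*g*(1/((2*r₀-1)/(4*r₀)))) * ((k:ℝ)+1)^(-(r₀+1/2)) := by
    intro k
    rw [hterm k]
    have hx1 := hone k
    have hx0 : (0:ℝ) < (k:ℝ)+1 := by linarith
    have hp : (0:ℝ) < ((k:ℝ)+1)^(-(2*r)) := Real.rpow_pos_of_pos hx0 _
    have hlx : 0 ≤ Real.log ((k:ℝ)+1) := Real.log_nonneg hx1
    have ha_pos : (0:ℝ) < g * ((k:ℝ)+1)^(-(2*r)) / (1+2*g*Zr) := by positivity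
    have hadiv : g * ((k:ℝ)+1)^(-(2*r)) / (1+2*g*Zr) ≤ g * ((k:ℝ)+1)^(-(2*r)) :=
      div_le_self (by positivity) hΛ1
    have ha0 : g * ((k:ℝ)+1)^(-(2*r)) / (1+2*g*Zr) ≤ g * ((k:ℝ)+1)^(-(2*r₀)) := by
      refine le_trans hadiv ?_
      exact mul_le_mul_of_nonneg_left
        (Real.rpow_le_rpow_of_exponent_le hx1 (by linarith)) hg.le
    have hb1 : 2*(1 - Real.log g + Real.log (1+2*g*Zr))
        * (g * ((k:ℝ)+1)^(-(2*r)) / (1+2*g*Zr))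
        ≤ 2*(1+|Real.log g|+2*g₀*Z₀) * (g * ((k:ℝ)+1)^(-(2*r₀))) := by
      apply mul_le_mul
      · rw [hlg]; linarith
      · exact ha0
      · exact ha_pos.le
      · have := abs_nonneg (Real.log g); linarith
    have hb2 : 2*(2*r*Real.log ((k:ℝ)+1))
        * (g * ((k:ℝ)+1)^(-(2*r)) / (1+2*g*Zr))
        ≤ (2*g) * ((1/((2*r₀-1)/(4*r₀))) * ((k:ℝ)+1)^(-(r₀+1/2))) := by
      have hc0 : 0 ≤ 2*(2*r*Real.log ((k:ℝ)+1)) := by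
        have : (0:ℝ) < r := by linarith
        positivity
      have step1 : 2*(2*r*Real.log ((k:ℝ)+1))
          * (g * ((k:ℝ)+1)^(-(2*r)) / (1+2*g*Zr))
          ≤ 2*(2*r*Real.log ((k:ℝ)+1)) * (g * ((k:ℝ)+1)^(-(2*r))) :=
        mul_le_mul_of_nonneg_left hadiv hc0
      have step2 : 2*(2*r*Real.log ((k:ℝ)+1)) * (g * ((k:ℝ)+1)^(-(2*r)))
          = (2*g) * (2*r*Real.log ((k:ℝ)+1) * ((k:ℝ)+1)^(-(2*r))) := by ring
      have step3 := aux_logbound r₀ r ((k:ℝ)+1) hr₀ hr hx1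
      calc 2*(2*r*Real.log ((k:ℝ)+1)) * (g * ((k:ℝ)+1)^(-(2*r)) / (1+2*g*Zr))
          ≤ (2*g) * (2*r*Real.log ((k:ℝ)+1) * ((k:ℝ)+1)^(-(2*r))) := by
            rw [← step2]; exact step1
        _ ≤ (2*g) * ((1/((2*r₀-1)/(4*r₀))) * ((k:ℝ)+1)^(-(r₀+1/2))) :=
            mul_le_mul_of_nonneg_left step3 (by positivity)
    calc 2 * ((1 - Real.log g + Real.log (1+2*g*Zr)) + 2*r*Real.log ((k:ℝ)+1))
          * (g * ((k:ℝ)+1)^(-(2*r)) / (1+2*g*Zr))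
        = 2*(1 - Real.log g + Real.log (1+2*g*Zr))
            * (g * ((k:ℝ)+1)^(-(2*r)) / (1+2*g*Zr))
          + 2*(2*r*Real.log ((k:ℝ)+1))
            * (g * ((k:ℝ)+1)^(-(2*r)) / (1+2*g*Zr)) := by ring
      _ ≤ 2*(1+|Real.log g|+2*g₀*Z₀) * (g * ((k:ℝ)+1)^(-(2*r₀)))
          + (2*g) * ((1/((2*r₀-1)/(4*r₀))) * ((k:ℝ)+1)^(-(r₀+1/2))) :=
          add_le_add hb1 hb2
      _ = (2*(1+|Real.log g|+2*g₀*Z₀)*g) * ((k:ℝ)+1)^(-(2*r₀))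
          + (2*g*(1/((2*r₀-1)/(4*r₀)))) * ((k:ℝ)+1)^(-(r₀+1/2)) := by ring
  have hupsum : Summable (fun k : ℕ =>
      (2*(1+|Real.log g|+2*g₀*Z₀)*g) * ((k:ℝ)+1)^(-(2*r₀))
        + (2*g*(1/((2*r₀-1)/(4*r₀)))) * ((k:ℝ)+1)^(-(r₀+1/2))) :=
    (hZ0sum.mul_left _).add (hZssum.mul_left _)
  have htermsum : Summable (fun k : ℕ =>
      2 * (1 + |Real.log (g * ((k:ℝ)+1)^(-(2*r)) / (1+2*g*Zr))|)
        * (g * ((k:ℝ)+1)^(-(2*r)) / (1+2*g*Zr))) :=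
    Summable.of_nonneg_of_le hterm_nonneg hup hupsum
  -- pointwise lower bound
  have hlow : ∀ k : ℕ,
      (2*(1+|Real.log g|)*(g/(1+2*g*Zr))) * ((k:ℝ)+1)^(-(2*r))
      ≤ 2 * (1 + |Real.log (g * ((k:ℝ)+1)^(-(2*r)) / (1+2*g*Zr))|)
        * (g * ((k:ℝ)+1)^(-(2*r)) / (1+2*g*Zr)) := by
    intro k
    rw [hterm k]
    have hx1 := hone k
    have hx0 : (0:ℝ) < (k:ℝ)+1 := by linarith
    have hlx : 0 ≤ Real.log ((k:ℝ)+1) := Real.log_nonneg hx1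
    have ha_pos : (0:ℝ) < g * ((k:ℝ)+1)^(-(2*r)) / (1+2*g*Zr) := by positivity
    have h5 : 2*(1+|Real.log g|)
        ≤ 2 * ((1 - Real.log g + Real.log (1+2*g*Zr)) + 2*r*Real.log ((k:ℝ)+1)) := by
      rw [hlg]
      have : (0:ℝ) ≤ 2*r*Real.log ((k:ℝ)+1) := by nlinarith
      linarith
    calc (2*(1+|Real.log g|)*(g/(1+2*g*Zr))) * ((k:ℝ)+1)^(-(2*r))
        = (2*(1+|Real.log g|)) * (g * ((k:ℝ)+1)^(-(2*r)) / (1+2*g*Zr)) := by ring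
      _ ≤ 2 * ((1 - Real.log g + Real.log (1+2*g*Zr)) + 2*r*Real.log ((k:ℝ)+1))
          * (g * ((k:ℝ)+1)^(-(2*r)) / (1+2*g*Zr)) :=
          mul_le_mul_of_nonneg_right h5 ha_pos.le
  constructor
  · -- lower bound
    have hfirst : (2 / (1+2*g₀*Z₀)) * (1+|Real.log g|) * g
        ≤ (2*(1+|Real.log g|)*(g/(1+2*g*Zr))) * Zr := by
      have e1 : (2 / (1+2*g₀*Z₀)) * (1+|Real.log g|) * g
          = (2*(1+|Real.log g|)*g)/(1+2*g₀*Z₀) := by ring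
      have e2 : (2*(1+|Real.log g|)*(g/(1+2*g*Zr))) * Zr
          = (2*(1+|Real.log g|)*g*Zr)/(1+2*g*Zr) := by ring
      rw [e1, e2]
      apply div_le_div₀
      · have : 0 ≤ 2*(1+|Real.log g|)*g := by positivity
        nlinarith
      · have : 0 ≤ 2*(1+|Real.log g|)*g := by positivity
        nlinarith
      · exact hΛpos
      · exact hΛle
    calc (2 / (1+2*g₀*Z₀)) * (1+|Real.log g|) * g
        ≤ (2*(1+|Real.log g|)*(g/(1+2*g*Zr))) * Zr := hfirst
      _ = ∑' k : ℕ, (2*(1+|Real.log g|)*(g/(1+2*g*Zr))) * ((k:ℝ)+1)^(-(2*r)) :=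
          tsum_mul_left.symm
      _ ≤ _ := Summable.tsum_le_tsum hlow (hrsum.mul_left _) htermsum
  · -- upper bound
    have htsum_up : (∑' k : ℕ,
        ((2*(1+|Real.log g|+2*g₀*Z₀)*g) * ((k:ℝ)+1)^(-(2*r₀))
          + (2*g*(1/((2*r₀-1)/(4*r₀)))) * ((k:ℝ)+1)^(-(r₀+1/2))))
        = (2*(1+|Real.log g|+2*g₀*Z₀)*g) * Z₀
          + (2*g*(1/((2*r₀-1)/(4*r₀)))) * Zs := by
      rw [Summable.tsum_add (hZ0sum.mul_left _) (hZssum.mul_left _), tsum_mul_left, tsum_mul_left]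
    have h₁ : (2*(1+|Real.log g|+2*g₀*Z₀)*g) * Z₀
        ≤ (2*(1+2*g₀*Z₀)*Z₀) * ((1+|Real.log g|)*g) := by
      nlinarith [mul_nonneg (mul_nonneg hg.le (le_trans zero_le_one hZ₀1))
        (mul_nonneg hA (abs_nonneg (Real.log g))), abs_nonneg (Real.log g),
        mul_nonneg hg.le (le_trans zero_le_one hZ₀1)]
    have h₂ : (2*g*(1/((2*r₀-1)/(4*r₀)))) * Zs
        ≤ ((1/((2*r₀-1)/(4*r₀)))*2*Zs) * ((1+|Real.log g|)*g) := by
      nlinarith [mul_nonneg (mul_nonneg (mul_nonneg (one_div_nonneg.mpr hδ.le) hZs0)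
        hg.le) (abs_nonneg (Real.log g)),
        mul_nonneg (mul_nonneg (one_div_nonneg.mpr hδ.le) hZs0) hg.le]
    calc (∑' k : ℕ, 2 * (1 + |Real.log (g * ((k:ℝ)+1)^(-(2*r)) / (1+2*g*Zr))|)
          * (g * ((k:ℝ)+1)^(-(2*r)) / (1+2*g*Zr)))
        ≤ ∑' k : ℕ, ((2*(1+|Real.log g|+2*g₀*Z₀)*g) * ((k:ℝ)+1)^(-(2*r₀))
            + (2*g*(1/((2*r₀-1)/(4*r₀)))) * ((k:ℝ)+1)^(-(r₀+1/2))) :=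
          Summable.tsum_le_tsum hup htermsum hupsum
      _ = (2*(1+|Real.log g|+2*g₀*Z₀)*g) * Z₀
            + (2*g*(1/((2*r₀-1)/(4*r₀)))) * Zs := htsum_up
      _ ≤ (2*(1+2*g₀*Z₀)*Z₀) * ((1+|Real.log g|)*g)
            + ((1/((2*r₀-1)/(4*r₀)))*2*Zs) * ((1+|Real.log g|)*g) := add_le_add h₁ h₂
      _ = (2*(1+2*g₀*Z₀)*Z₀ + (1/((2*r₀-1)/(4*r₀)))*2*Zs) * (1+|Real.log g|) * g := by
          ring
end
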